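/- Let L be a Lie algebra over a field 𝔽 and let α be a commuting automorphism of L. Then ⁅α(x) − x, ⁅y, z⁆⁆ = 0 for all x, y, z ∈ L. -/

import Mathlib

/-- For a commuting automorphism `α` of a Lie algebra `L` over a field `𝔽`, one has
`⁅α x − x, ⁅y, z⁆⁆ = 0` for all `x, y, z ∈ L`. -/
theorem commuting_aut_diff_bracket_eq_zero {F L : Type*} [Field F] [LieRing L] [LieAlgebra F L]
    (α : L ≃ₗ⁅F⁆ L) (hα : ∀ x : L, ⁅α x, x⁆ = 0) :
    ∀ x y z : L, ⁅α x - x, ⁅y, z⁆⁆ = 0 := by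
  have hadd : ∀ a b : L, α (a + b) = α a + α b := fun a b => by
    rw [← LieEquiv.coe_toLieHom α, map_add]
  have hsub : ∀ a b : L, α (a - b) = α a - α b := fun a b => by
    rw [← LieEquiv.coe_toLieHom α, map_sub]
  -- polarization of the commuting identity
  have L1 : ∀ a b : L, ⁅α a, b⁆ = ⁅a, α b⁆ := by
    intro a b
    have h0 := hα (a + b)
    rw [hadd, add_lie, lie_add, lie_add, hα a, hα b, zero_add, add_zero] at h0
    exact (eq_neg_of_add_eq_zero_left h0).trans (lie_skew a (α b))
  have L2 : ∀ a b : L, α ⁅a, b⁆ = ⁅a, α (α b)⁆ := by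
    intro a b
    rw [LieEquiv.map_lie, L1]
  -- key: ⁅⁅a,b⁆, α² c⁆ = ⁅⁅a,b⁆, c⁆
  have L3 : ∀ a b c : L, ⁅⁅a, b⁆, α (α c)⁆ = ⁅⁅a, b⁆, c⁆ := by
    have L3' : ∀ a b c : L, ⁅⁅a, b⁆, α (α (α (α c)))⁆ = ⁅⁅a, b⁆, α (α c)⁆ := by
      intro a b c
      have e1 : α ⁅a, ⁅b, c⁆⁆ = ⁅a, ⁅b, α (α (α (α c)))⁆⁆ := by
        rw [L2 a ⁅b, c⁆, L2 b c, L2 b (α (α c))]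
      have e2 : α ⁅a, ⁅b, c⁆⁆
          = ⁅⁅a, b⁆, α (α c)⁆ + ⁅b, ⁅a, α (α (α (α c)))⁆⁆ := by
        rw [leibniz_lie a b c, hadd, L2 ⁅a, b⁆ c, L2 b ⁅a, c⁆, L2 a c, L2 a (α (α c))]
      have e3 : ⁅a, ⁅b, α (α (α (α c)))⁆⁆
          = ⁅⁅a, b⁆, α (α (α (α c)))⁆ + ⁅b, ⁅a, α (α (α (α c)))⁆⁆ :=
        leibniz_lie a b (α (α (α (α c))))
      have e4 : ⁅⁅a, b⁆, α (α (α (α c)))⁆ + ⁅b, ⁅a, α (α (α (α c)))⁆⁆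
          = ⁅⁅a, b⁆, α (α c)⁆ + ⁅b, ⁅a, α (α (α (α c)))⁆⁆ := by
        rw [← e3, ← e1, e2]
      exact add_right_cancel e4
    intro a b c
    have := L3' a b (α.symm (α.symm c))
    simpa using this
  -- moving D := α - 1 across a bracket
  have d1 : ∀ a b : L, ⁅α a - a, b⁆ = ⁅a, α b - b⁆ := by
    intro a b
    rw [sub_lie, lie_sub, L1]
  -- ⁅a, α²b - b⁆ = α⁅a,b⁆ - ⁅a,b⁆
  have dU : ∀ a b : L, ⁅a, α (α b) - b⁆ = α ⁅a, b⁆ - ⁅a, b⁆ := by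
    intro a b
    rw [lie_sub, L2]
  have L3sub : ∀ a b c : L, ⁅⁅a, b⁆, α (α c) - c⁆ = 0 := by
    intro a b c
    rw [lie_sub, L3, sub_self]
  by_cases h2 : (2 : F) = 0
  · -- characteristic two
    have two0 : ∀ v : L, v + v = 0 := by
      intro v
      have : (2 : F) • v = 0 := by rw [h2, zero_smul]
      rwa [two_smul] at this
    -- D⁅a,b⁆ = ⁅Da, Db⁆ in char 2
    have d2 : ∀ a b : L, ⁅α a - a, α b - b⁆ = α ⁅a, b⁆ - ⁅a, b⁆ := by
      intro a b
      rw [sub_lie, lie_sub, lie_sub, L1 a b, ← LieEquiv.map_lie]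
      have key : α ⁅a, b⁆ - ⁅a, α b⁆ - (⁅a, α b⁆ - ⁅a, b⁆)
          = α ⁅a, b⁆ - ⁅a, b⁆ + (⁅a, b⁆ + ⁅a, b⁆) - (⁅a, α b⁆ + ⁅a, α b⁆) := by abel
      rw [key, two0, two0, add_zero, sub_zero]
    -- Lemma A : ⁅a, ⁅Db, Uc⁆⁆ = 0
    have A : ∀ a b c : L, ⁅a, ⁅α b - b, α (α c) - c⁆⁆ = 0 := by
      intro a b c
      rw [leibniz_lie, L3sub, zero_add, dU a c, ← d1 (α b - b) ⁅a, c⁆]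
      have e2 : α (α b - b) - (α b - b) = (α (α b) - b) - ((α b - b) + (α b - b)) := by
        rw [hsub]; abel
      rw [e2, sub_lie, add_lie, two0, sub_zero, ← lie_skew, L3sub, neg_zero]
    -- Lemma B : ⁅Da, ⁅Db, c⁆⁆ = 0
    have B : ∀ a b c : L, ⁅α a - a, ⁅α b - b, c⁆⁆ = 0 := by
      intro a b c
      rw [d1, ← dU (α b - b) c]
      exact A a b c
    intro x y z
    rw [d1 x ⁅y, z⁆, ← d2 y z, leibniz_lie, ← d1 x y, ← d1 x z, B y x z, add_zero,
      ← lie_skew, B z x y, neg_zero]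
  · -- characteristic ≠ 2
    have key : ∀ a b c : L, ⁅α a - a, ⁅b, c⁆⁆ = ⁅a, ⁅b, α (α c)⁆⁆ - ⁅a, ⁅b, c⁆⁆ := by
      intro a b c
      rw [sub_lie, L1 a ⁅b, c⁆, L2 b c]
    have cyc : ∀ a b c : L, ⁅α a - a, ⁅b, c⁆⁆ = -⁅α b - b, ⁅c, a⁆⁆ := by
      intro a b c
      rw [key a b c, key b c a]
      rw [leibniz_lie a b (α (α c)), leibniz_lie a b c, L3 a b c]
      have s1 : ⁅a, α (α c)⁆ = -⁅c, α (α a)⁆ := by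
        rw [← L1 a (α c), ← L1 (α a) c, ← lie_skew]
      have s2 : ⁅a, c⁆ = -⁅c, a⁆ := (lie_skew a c).symm
      rw [s1, s2, lie_neg, lie_neg]
      abel
    intro x y z
    have c1 := cyc x y z
    rw [cyc y z x, cyc z x y] at c1
    simp only [neg_neg] at c1
    have hA : ⁅α x - x, ⁅y, z⁆⁆ + ⁅α x - x, ⁅y, z⁆⁆ = 0 :=
      eq_neg_iff_add_eq_zero.mp c1
    have h2s : (2 : F) • ⁅α x - x, ⁅y, z⁆⁆ = 0 := by rw [two_smul]; exact hA
    rcases smul_eq_zero.mp h2s with h | h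
    · exact absurd h h2
    · exact h
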